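/- Let n, N ∈ ℕ and a_1, …, a_{3n} ∈ ℕ satisfy N/4 < a_i < N/2 for all i and Σ_{i=1}^{3n} a_i = nN, and let v, w be the associated words over 𝒜 = {a,b,c,d}. Then ν(v) = 13n − nN, ν(w) = −5n − nN, and hence ν(v) − ν(w) = 18n. -/
import Mathlib


/-- Two positive words are related if they contain the same number of each letter. -/
def Related {A : Type*} [DecidableEq A] (v w : List A) : Prop :=
  ∀ a : A, v.count a = w.count a

/-- `w` is a cyclic block interchange of `v`. -/
def IsCBI {A : Type*} (v w : List A) : Prop :=
  ∃ v' w' : List A, List.IsRotated v' v ∧ List.IsRotated w' w ∧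
    ∃ w1 w2 w3 w4 : List A, v' = w1 ++ w2 ++ w3 ++ w4 ∧ w' = w1 ++ w4 ++ w3 ++ w2

open Classical in
/-- The cyclic block interchange distance between two related words. -/
noncomputable def dcbi {A : Type*} (v w : List A) : ℕ :=
  if List.IsRotated v w then 0
  else sInf {k | ∃ z : ℕ → List A, z 0 = v ∧ z k = w ∧ ∀ i < k, IsCBI (z i) (z (i + 1))}

/-- The four-letter alphabet `𝒜 = {a,b,c,d}`. -/
inductive Letter where
  | a | b | c | d
deriving DecidableEq

open Letter

/-- The word `v = a^(n+1) (b c^(a₁) d)(b c^(a₂) d) ⋯ (b c^(a_{3n}) d) b`. -/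
def vWord (n : ℕ) (f : Fin (3 * n) → ℕ) : List Letter :=
  List.replicate (n + 1) a ++
    (List.ofFn fun i : Fin (3 * n) => b :: (List.replicate (f i) c ++ [d])).flatten ++ [b]

/-- The word `w = (a c^N d³)^n a b^(3n+1)`. -/
def wWord (n N : ℕ) : List Letter :=
  (List.replicate n (a :: (List.replicate N c ++ [d, d, d]))).flatten ++
    a :: List.replicate (3 * n + 1) b

/-- The instance of 3-PARTITION given by `a₁, …, a_{3n}` and `N` is solvable:
`{1, …, 3n}` can be partitioned into `n` three-element sets, each summing to `N`. -/
def Solvable3Partition (n N : ℕ) (f : Fin (3 * n) → ℕ) : Prop :=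
  ∃ P : Fin n → Finset (Fin (3 * n)),
    (∀ j, (P j).card = 3) ∧ (∀ j, ∑ i ∈ P j, f i = N) ∧ (∀ i, ∃! j, i ∈ P j)

/-- `ν_{xy}(u)`: the number of occurrences of `xy` as a cyclic subword of `u`. -/
def nuPair (p q : Letter) (u : List Letter) : ℕ :=
  (List.range u.length).countP
    (fun i => decide (u[i]? = some p ∧ u[(i + 1) % u.length]? = some q))

/-- The function `ν = ν_{aa} + ν_{bc} + ν_{cd} + ν_{db} − ν_{ac} − ν_{cc} − ν_{dd} −
ν_{da} − ν_{bb}`. -/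
def nu (u : List Letter) : ℤ :=
  (nuPair a a u : ℤ) + nuPair b c u + nuPair c d u + nuPair d b u
    - nuPair a c u - nuPair c c u - nuPair d d u - nuPair d a u - nuPair b b u

/-- weight table -/
def W : Letter → Letter → ℤ
  | .a, .a => 1 | .b, .c => 1 | .c, .d => 1 | .d, .b => 1
  | .a, .c => -1 | .c, .c => -1 | .d, .d => -1 | .d, .a => -1 | .b, .b => -1
  | _, _ => 0

def E : List Letter → ℤ
  | x :: y :: t => W x y + E (y :: t)
  | _ => 0

lemma countP_range_getElem {α : Type*} (l : List α) (P : α → Bool) :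
    (List.range l.length).countP
      (fun i => match l[i]? with | some x => P x | none => false) = l.countP P := by
  induction l with
  | nil => simp
  | cons y l ih =>
    rw [List.length_cons, List.range_succ_eq_map, List.countP_cons, List.countP_map]
    simp only [Function.comp_def, List.getElem?_cons_succ, List.getElem?_cons_zero,
      List.countP_cons, ih]

lemma nuPair_eq_countP (p q : Letter) (u : List Letter) :
    nuPair p q u
      = (u.zip (u.rotate 1)).countP (fun pr => decide (pr.1 = p ∧ pr.2 = q)) := by
  rw [nuPair,
    ← countP_range_getElem (u.zip (u.rotate 1)) (fun pr => decide (pr.1 = p ∧ pr.2 = q))]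
  have hlen : (u.zip (u.rotate 1)).length = u.length := by
    simp [List.length_zip, List.length_rotate]
  rw [hlen]
  apply List.countP_congr
  intro i hi
  rw [List.mem_range] at hi
  have hi2 : i < (u.zip (u.rotate 1)).length := by omega
  have hm : (i + 1) % u.length < u.length := Nat.mod_lt _ (by omega)
  rw [List.getElem?_eq_getElem hi2, List.getElem_zip, List.getElem_rotate,
    List.getElem?_eq_getElem hi, List.getElem?_eq_getElem hm]
  simp [List.length_rotate]

lemma sum_weight_eq (l : List (Letter × Letter)) :
    ((l.map fun pr => W pr.1 pr.2).sum : ℤ) =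
      (l.countP (fun pr => decide (pr.1 = a ∧ pr.2 = a)) : ℤ)
      + l.countP (fun pr => decide (pr.1 = b ∧ pr.2 = c))
      + l.countP (fun pr => decide (pr.1 = c ∧ pr.2 = d))
      + l.countP (fun pr => decide (pr.1 = d ∧ pr.2 = b))
      - l.countP (fun pr => decide (pr.1 = a ∧ pr.2 = c))
      - l.countP (fun pr => decide (pr.1 = c ∧ pr.2 = c))
      - l.countP (fun pr => decide (pr.1 = d ∧ pr.2 = d))
      - l.countP (fun pr => decide (pr.1 = d ∧ pr.2 = a))
      - l.countP (fun pr => decide (pr.1 = b ∧ pr.2 = b)) := by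
  induction l with
  | nil => simp
  | cons pr l ih =>
    obtain ⟨x, y⟩ := pr
    simp only [List.map_cons, List.sum_cons, List.countP_cons, ih]
    cases x <;> cases y <;> simp [W] <;> push_cast <;> ring

lemma nu_eq_sum (u : List Letter) :
    nu u = ((u.zip (u.rotate 1)).map fun pr => W pr.1 pr.2).sum := by
  rw [nu, sum_weight_eq]
  simp only [nuPair_eq_countP]

lemma zip_rotate_sum (t : List Letter) (x z : Letter) :
    (((x :: t).zip (t ++ [z])).map fun pr => W pr.1 pr.2).sum = E (x :: (t ++ [z])) := by
  induction t generalizing x with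
  | nil => simp [E]
  | cons y t ih => simp only [List.zip_cons_cons, List.cons_append, List.map_cons,
      List.sum_cons, ih y, E, List.append_eq]

lemma nu_cons (x : Letter) (t : List Letter) : nu (x :: t) = E (x :: (t ++ [x])) := by
  rw [nu_eq_sum, ← zip_rotate_sum t x x]
  congr 1
  rw [List.rotate_cons_succ, List.rotate_zero]

lemma E_append (s : List Letter) (x : Letter) (t : List Letter) :
    E (s ++ x :: t) = E (s ++ [x]) + E (x :: t) := by
  induction s with
  | nil => simp [E]
  | cons y s ih =>
    cases s with
    | nil => simp [E]
    | cons z s =>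
      simp only [List.cons_append, List.append_eq, E] at ih ⊢
      omega

lemma E_replicate_cons (k : ℕ) (x y : Letter) (t : List Letter) :
    E (List.replicate (k + 1) x ++ y :: t) = k * W x x + W x y + E (y :: t) := by
  induction k with
  | zero => simp [E]
  | succ m ih =>
    have h2 : E (List.replicate (m + 1 + 1) x ++ y :: t)
        = W x x + E (List.replicate (m + 1) x ++ y :: t) := by
      simp only [List.replicate_succ, List.cons_append, E, List.append_eq]
    rw [h2, ih]
    push_cast
    ring

/-- the block for `v` -/
def blkV (k : ℕ) : List Letter := b :: (List.replicate k c ++ [d])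

lemma E_blocksV (g : List ℕ) (hg : ∀ k ∈ g, 1 ≤ k) (t : List Letter) :
    E ((g.map blkV).flatten ++ b :: t)
      = 4 * g.length - (g.sum : ℤ) + E (b :: t) := by
  induction g with
  | nil => simp
  | cons k g ih =>
    obtain ⟨k', rfl⟩ : ∃ k', k = k' + 1 := ⟨k - 1, by have := hg k (by simp); omega⟩
    have hg' : ∀ x ∈ g, 1 ≤ x := fun x hx => hg x (by simp [hx])
    obtain ⟨t', ht'⟩ : ∃ t', (g.map blkV).flatten ++ b :: t = b :: t' := by
      cases g with
      | nil => exact ⟨t, by simp⟩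
      | cons k₂ g =>
        exact ⟨List.replicate k₂ c ++ [d] ++ ((g.map blkV).flatten ++ b :: t),
          by simp [blkV]⟩
    have hstep : E (((((k' + 1) :: g).map blkV).flatten ++ b :: t))
        = E (blkV (k' + 1) ++ b :: t') := by
      rw [List.map_cons, List.flatten_cons, List.append_assoc, ht']
    have hmain : E (blkV (k' + 1) ++ b :: t') = (4 - (k' + 1) : ℤ) + E (b :: t') := by
      have h1 : blkV (k' + 1) ++ b :: t'
          = b :: (List.replicate (k' + 1) c ++ d :: b :: t') := by simp [blkV]
      have h2 : E (b :: (List.replicate (k' + 1) c ++ d :: b :: t'))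
          = W b c + E (List.replicate (k' + 1) c ++ d :: b :: t') := by
        simp only [List.replicate_succ, List.cons_append, E, List.append_eq]
      have h3 : E (d :: b :: t') = W d b + E (b :: t') := by simp only [E]
      rw [h1, h2, E_replicate_cons, h3]
      simp only [W]
      push_cast
      ring
    rw [hstep, hmain, ← ht', ih hg']
    push_cast [List.sum_cons, List.length_cons]
    ring

/-- the block for `w` -/
def blkW (N : ℕ) : List Letter := a :: (List.replicate N c ++ [d, d, d])

lemma E_blocksW (N : ℕ) (hN : 1 ≤ N) (m : ℕ) (t : List Letter) :
    E ((List.replicate m (blkW N)).flatten ++ a :: t)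
      = -(m : ℤ) * ((N : ℤ) + 2) + E (a :: t) := by
  obtain ⟨N', rfl⟩ : ∃ N', N = N' + 1 := ⟨N - 1, by omega⟩
  induction m with
  | zero => simp
  | succ m ih =>
    obtain ⟨t', ht'⟩ : ∃ t', (List.replicate m (blkW (N' + 1))).flatten ++ a :: t
        = a :: t' := by
      cases m with
      | zero => exact ⟨t, by simp⟩
      | succ m₂ =>
        refine ⟨List.replicate (N' + 1) c ++ [d, d, d] ++
          ((List.replicate m₂ (blkW (N' + 1))).flatten ++ a :: t), ?_⟩
        rw [List.replicate_succ]
        simp [blkW]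
    have hstep : E ((List.replicate (m + 1) (blkW (N' + 1))).flatten ++ a :: t)
        = E (blkW (N' + 1) ++ a :: t') := by
      rw [List.replicate_succ, List.flatten_cons, List.append_assoc, ht']
    have hmain : E (blkW (N' + 1) ++ a :: t')
        = -((N' : ℤ) + 1 + 2) + E (a :: t') := by
      have h1 : blkW (N' + 1) ++ a :: t'
          = a :: (List.replicate (N' + 1) c ++ d :: d :: d :: a :: t') := by simp [blkW]
      have h2 : E (a :: (List.replicate (N' + 1) c ++ d :: d :: d :: a :: t'))
          = W a c + E (List.replicate (N' + 1) c ++ d :: d :: d :: a :: t') := by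
        simp only [List.replicate_succ, List.cons_append, E, List.append_eq]
      have h3 : E (d :: d :: d :: a :: t') = W d d + W d d + W d a + E (a :: t') := by
        simp only [E]; ring
      rw [h1, h2, E_replicate_cons, h3]
      simp only [W]
      push_cast
      ring
    rw [hstep, hmain, ← ht', ih]
    push_cast
    ring

lemma nu_eq_E (u : List Letter) (x : Letter) (t : List Letter) (h : u = x :: t) :
    nu u = E (u ++ [x]) := by
  subst h
  rw [nu_cons]
  simp

/-- For the associated words `v, w` of an instance of 3-PARTITION we have
`ν(v) = 13n − nN`, `ν(w) = −5n − nN`, and hence `ν(v) − ν(w) = 18n`. -/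
theorem nu_of_associated_words (n N : ℕ) (f : Fin (3 * n) → ℕ)
    (hbound : ∀ i, N < 4 * f i ∧ 2 * f i < N) (hsum : ∑ i, f i = n * N) :
    nu (vWord n f) = 13 * (n : ℤ) - (n : ℤ) * N ∧
    nu (wWord n N) = -5 * (n : ℤ) - (n : ℤ) * N ∧
    nu (vWord n f) - nu (wWord n N) = 18 * (n : ℤ) := by
  have hv : nu (vWord n f) = 13 * (n : ℤ) - (n : ℤ) * N := by
    obtain ⟨g, hF, hglen, hgsum, hg1⟩ : ∃ g : List ℕ,
        (List.ofFn fun i : Fin (3 * n) => b :: (List.replicate (f i) c ++ [d]))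
          = g.map blkV ∧ g.length = 3 * n ∧ (g.sum : ℤ) = (n : ℤ) * N ∧
          ∀ k ∈ g, 1 ≤ k := by
      refine ⟨List.ofFn f, ?_, by simp, ?_, ?_⟩
      · rw [List.map_ofFn]; rfl
      · rw [List.sum_ofFn, hsum]; push_cast; ring
      · intro k hk
        rw [List.mem_ofFn] at hk
        obtain ⟨i, rfl⟩ := hk
        have := (hbound i).1
        omega
    obtain ⟨t, ht⟩ : ∃ t, vWord n f = a :: t := by
      refine ⟨List.replicate n a ++
        ((List.ofFn fun i : Fin (3 * n) => b :: (List.replicate (f i) c ++ [d])).flatten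
          ++ [b]), ?_⟩
      rw [vWord, List.replicate_succ]
      simp
    rw [nu_eq_E _ a t ht, vWord, hF]
    obtain ⟨t', ht'⟩ : ∃ t', (g.map blkV).flatten ++ b :: [a] = b :: t' := by
      cases g with
      | nil => exact ⟨[a], by simp⟩
      | cons k₂ g =>
        exact ⟨List.replicate k₂ c ++ [d] ++ ((g.map blkV).flatten ++ b :: [a]),
          by simp [blkV]⟩
    have harr : (List.replicate (n + 1) a ++ (g.map blkV).flatten ++ [b]) ++ [a]
        = List.replicate (n + 1) a ++ b :: t' := by rw [← ht']; simp
    rw [harr, E_replicate_cons, ← ht', E_blocksV g hg1, hglen, hgsum]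
    simp only [E, W]
    push_cast
    ring
  have hw : nu (wWord n N) = -5 * (n : ℤ) - (n : ℤ) * N := by
    obtain ⟨t, ht⟩ : ∃ t, wWord n N = a :: t := by
      rw [wWord]
      cases n with
      | zero => exact ⟨List.replicate (3 * 0 + 1) b, by simp⟩
      | succ m =>
        refine ⟨List.replicate N c ++ d :: d :: d ::
          ((List.replicate m (a :: (List.replicate N c ++ [d, d, d]))).flatten ++
            a :: List.replicate (3 * (m + 1) + 1) b), ?_⟩
        rw [List.replicate_succ]
        simp
    rw [nu_eq_E _ a t ht, wWord]
    cases n with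
    | zero => simp [E, W]
    | succ m =>
      have hN : 1 ≤ N := by
        have h0 := hbound ⟨0, by omega⟩
        omega
      have hBl : (a :: (List.replicate N c ++ [d, d, d])) = blkW N := rfl
      have harr : ((List.replicate (m + 1) (blkW N)).flatten
            ++ a :: List.replicate (3 * (m + 1) + 1) b) ++ [a]
          = (List.replicate (m + 1) (blkW N)).flatten
            ++ a :: (List.replicate (3 * (m + 1) + 1) b ++ [a]) := by simp
      rw [hBl, harr, E_blocksW N hN]
      have h2 : E (Letter.a :: (List.replicate (3 * (m + 1) + 1) b ++ [a]))
          = W a b + E (List.replicate (3 * (m + 1) + 1) b ++ [a]) := by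
        simp only [List.replicate_succ, List.cons_append, E, List.append_eq]
      have h3 : List.replicate (3 * (m + 1) + 1) b ++ [a]
          = List.replicate (3 * (m + 1) + 1) b ++ Letter.a :: [] := rfl
      rw [h2, h3, E_replicate_cons]
      simp only [E, W]
      push_cast
      ring
  exact ⟨hv, hw, by rw [hv, hw]; ring⟩
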